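/- Let n ∈ ℕ and let λ_n be the uniform probability measure on {-1,1}^n. Then for every (d_1,…,d_n) ∈ ℝ^n and every ξ ∈ (0,1): λ_n({y ∈ {-1,1}^n : |Σ_{m=1}^n y_m d_m|² ≥ ξ·Σ_{m=1}^n d_m²}) ≥ (1/3)(1−ξ)². -/

import Mathlib

open Finset

noncomputable def sgn (b : Bool) : ℝ := if b then 1 else -1

lemma sum_pi_succ (n : ℕ) (F : (Fin (n+1) → Bool) → ℝ) :
    ∑ y : Fin (n+1) → Bool, F y = ∑ b : Bool, ∑ y : Fin n → Bool, F (Fin.cons b y) := by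
  calc ∑ y : Fin (n+1) → Bool, F y
      = ∑ p : Bool × (Fin n → Bool), F (Fin.cons p.1 p.2) :=
        Fintype.sum_equiv (Fin.consEquiv (fun _ => Bool)).symm
          (fun y => F y) (fun p => F (Fin.cons p.1 p.2)) (fun y => by
            show F y = F (Fin.cons (y 0) (Fin.tail y))
            congr 1
            exact (Fin.cons_self_tail y).symm)
    _ = ∑ b : Bool, ∑ y : Fin n → Bool, F (Fin.cons b y) :=
        Fintype.sum_prod_type (f := fun p => F (Fin.cons p.1 p.2))

lemma sum_cons (n : ℕ) (d : Fin (n+1) → ℝ) (b : Bool) (y : Fin n → Bool) :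
    ∑ m, sgn ((Fin.cons b y : Fin (n+1) → Bool) m) * d m
      = sgn b * d 0 + ∑ m, sgn (y m) * d (Fin.succ m) := by
  rw [Fin.sum_univ_succ]; simp

lemma moment2 : ∀ n (d : Fin n → ℝ),
    ∑ y : Fin n → Bool, (∑ m, sgn (y m) * d m) ^ 2 = 2 ^ n * ∑ m, d m ^ 2 := by
  intro n
  induction n with
  | zero => intro d; simp
  | succ n ih =>
    intro d
    rw [sum_pi_succ]
    simp only [sum_cons]
    rw [Fintype.sum_bool]
    have h1 : sgn true = 1 := rfl
    have h2 : sgn false = -1 := rfl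
    rw [h1, h2]
    have expand : ∀ y : Fin n → Bool,
        (1 * d 0 + ∑ m, sgn (y m) * d (Fin.succ m)) ^ 2
        + (-1 * d 0 + ∑ m, sgn (y m) * d (Fin.succ m)) ^ 2
        = 2 * d 0 ^ 2 + 2 * (∑ m, sgn (y m) * d (Fin.succ m)) ^ 2 := by
      intro y; ring
    rw [← Finset.sum_add_distrib]
    simp only [expand]
    have hcard : (Finset.univ : Finset (Fin n → Bool)).card = 2 ^ n := by
      simp [Fintype.card_pi]
    rw [Finset.sum_add_distrib, Finset.sum_const, ← Finset.mul_sum,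
      ih (fun m => d (Fin.succ m)), Fin.sum_univ_succ, hcard, nsmul_eq_mul]
    push_cast
    ring

lemma moment4 : ∀ n (d : Fin n → ℝ),
    ∑ y : Fin n → Bool, (∑ m, sgn (y m) * d m) ^ 4 ≤ 3 * 2 ^ n * (∑ m, d m ^ 2) ^ 2 := by
  intro n
  induction n with
  | zero => intro d; simp
  | succ n ih =>
    intro d
    rw [sum_pi_succ]
    simp only [sum_cons]
    rw [Fintype.sum_bool]
    have h1 : sgn true = 1 := rfl
    have h2 : sgn false = -1 := rfl
    rw [h1, h2]
    have expand : ∀ y : Fin n → Bool,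
        (1 * d 0 + ∑ m, sgn (y m) * d (Fin.succ m)) ^ 4
        + (-1 * d 0 + ∑ m, sgn (y m) * d (Fin.succ m)) ^ 4
        = 2 * d 0 ^ 4 + 12 * d 0 ^ 2 * (∑ m, sgn (y m) * d (Fin.succ m)) ^ 2
          + 2 * (∑ m, sgn (y m) * d (Fin.succ m)) ^ 4 := by
      intro y; ring
    rw [← Finset.sum_add_distrib]
    simp only [expand]
    rw [Finset.sum_add_distrib, Finset.sum_add_distrib, Finset.sum_const,
      ← Finset.mul_sum, ← Finset.mul_sum, moment2 n (fun m => d (Fin.succ m))]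
    have hih := ih (fun m => d (Fin.succ m))
    have hcard : (Finset.univ : Finset (Fin n → Bool)).card = 2 ^ n := by
      simp [Fintype.card_pi]
    rw [hcard, nsmul_eq_mul]
    have hps : (2:ℝ) ^ (n+1) = 2 * 2 ^ n := by ring
    have hD : (0:ℝ) ≤ ∑ m, d (Fin.succ m) ^ 2 := by positivity
    have hd0 : (0:ℝ) ≤ d 0 ^ 4 := by positivity
    have hp : (0:ℝ) < 2 ^ n := by positivity
    rw [Fin.sum_univ_succ]
    push_cast
    nlinarith [hih, hps, mul_nonneg hp.le hd0, sq_nonneg (d 0),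
      mul_nonneg (mul_nonneg hp.le (sq_nonneg (d 0))) hD]

theorem stmt10 (n : ℕ) (d : Fin n → ℝ) (ξ : ℝ) (hξ0 : 0 < ξ) (hξ1 : ξ < 1) :
    (1 / 3) * (1 - ξ) ^ 2 ≤
      (Nat.card {y : Fin n → Bool //
          ξ * ∑ m, (d m) ^ 2 ≤ (∑ m, (if y m then (1 : ℝ) else -1) * d m) ^ 2} : ℝ)
        / 2 ^ n := by
  classical
  set S : (Fin n → Bool) → ℝ := fun y => ∑ m, sgn (y m) * d m with hS
  have hSeq : ∀ y : Fin n → Bool,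
      (∑ m, (if y m then (1 : ℝ) else -1) * d m) = S y := fun y => rfl
  set D : ℝ := ∑ m, d m ^ 2 with hD
  have hD0 : 0 ≤ D := by positivity
  set P : (Fin n → Bool) → Prop := fun y => ξ * D ≤ (S y) ^ 2 with hP
  set A : Finset (Fin n → Bool) := Finset.univ.filter P with hA
  have hNat : (Nat.card {y : Fin n → Bool //
      ξ * ∑ m, (d m) ^ 2 ≤ (∑ m, (if y m then (1 : ℝ) else -1) * d m) ^ 2} : ℝ)
      = (A.card : ℝ) := by
    rw [Nat.card_eq_fintype_card, Fintype.card_subtype]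
    congr 2
  rw [hNat]
  have hp2 : (0:ℝ) < 2 ^ n := by positivity
  rw [le_div_iff₀ hp2]
  have hcardU : ((Finset.univ : Finset (Fin n → Bool)).card : ℝ) = 2 ^ n := by
    simp [Fintype.card_pi]
  by_cases hDz : D = 0
  · have : A = Finset.univ := by
      apply Finset.eq_univ_iff_forall.mpr
      intro y
      simp only [hA, Finset.mem_filter, Finset.mem_univ, true_and, hP]
      rw [hDz, mul_zero]; positivity
    rw [this, hcardU]
    nlinarith [hp2, mul_pos hξ0 hp2, mul_pos (mul_pos hξ0 hξ0) hp2]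
  · have hDpos : 0 < D := lt_of_le_of_ne hD0 (Ne.symm hDz)
    -- total second moment
    have hM2 : ∑ y ∈ A, S y ^ 2 + ∑ y ∈ Aᶜ, S y ^ 2 = 2 ^ n * D :=
      by rw [Finset.sum_add_sum_compl]; exact moment2 n d
    -- complement bound
    have hcomp : ∑ y ∈ Aᶜ, S y ^ 2 ≤ 2 ^ n * (ξ * D) := by
      calc ∑ y ∈ Aᶜ, S y ^ 2 ≤ ∑ _y ∈ Aᶜ, (ξ * D) := by
            apply Finset.sum_le_sum
            intro y hy
            simp only [hA, Finset.mem_compl, Finset.mem_filter, Finset.mem_univ,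
              true_and, hP, not_le] at hy
            exact le_of_lt hy
        _ = (Aᶜ.card : ℝ) * (ξ * D) := by rw [Finset.sum_const, nsmul_eq_mul]
        _ ≤ 2 ^ n * (ξ * D) := by
            apply mul_le_mul_of_nonneg_right _ (by positivity)
            rw [← hcardU]
            exact_mod_cast Finset.card_le_card (Finset.subset_univ _)
    have hT : (1 - ξ) * (2 ^ n * D) ≤ ∑ y ∈ A, S y ^ 2 := by nlinarith
    -- Cauchy-Schwarz
    have hCS : (∑ y ∈ A, S y ^ 2) ^ 2 ≤ (∑ y ∈ A, (S y ^ 2) ^ 2) * (A.card : ℝ) := by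
      have h := Finset.sum_mul_sq_le_sq_mul_sq A (fun y => S y ^ 2) (fun _ => 1)
      simpa using h
    have hM4 : ∑ y ∈ A, (S y ^ 2) ^ 2 ≤ 3 * 2 ^ n * D ^ 2 := by
      calc ∑ y ∈ A, (S y ^ 2) ^ 2 ≤ ∑ y : Fin n → Bool, (S y ^ 2) ^ 2 := by
            apply Finset.sum_le_sum_of_subset_of_nonneg (Finset.subset_univ _)
            intro y _ _; positivity
        _ = ∑ y : Fin n → Bool, S y ^ 4 := by
            apply Finset.sum_congr rfl; intro y _; ring
        _ ≤ 3 * 2 ^ n * D ^ 2 := moment4 n d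
    have hTnn : 0 ≤ ∑ y ∈ A, S y ^ 2 := by positivity
    have hca : (0:ℝ) ≤ (A.card : ℝ) := by positivity
    have key : ((1 - ξ) * (2 ^ n * D)) ^ 2 ≤ 3 * 2 ^ n * D ^ 2 * (A.card : ℝ) := by
      calc ((1 - ξ) * (2 ^ n * D)) ^ 2 ≤ (∑ y ∈ A, S y ^ 2) ^ 2 := by
            apply pow_le_pow_left₀
              (mul_nonneg (by linarith : (0:ℝ) ≤ 1 - ξ) (by positivity)) hT
        _ ≤ (∑ y ∈ A, (S y ^ 2) ^ 2) * (A.card : ℝ) := hCS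
        _ ≤ 3 * 2 ^ n * D ^ 2 * (A.card : ℝ) :=
            mul_le_mul_of_nonneg_right hM4 hca
    nlinarith [key, mul_pos hp2 (mul_pos hDpos hDpos),
      mul_pos (mul_pos hp2 hp2) (mul_pos hDpos hDpos)]
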